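/- For every d ≥ 3 and every real ε > 0 there exists N such that for all n ≥ N, every d-dimensional latin hypercube Q of order n contains at least (d(d−1)/2 + d + 1 − ε) · n^(2d) cuboctahedra. -/

import Mathlib

/-- A `d`-dimensional latin hypercube of order `n`: in each line (each coordinate varies,
the others are fixed) all symbols are distinct. -/
def IsLatinHypercube {d n : ℕ} (Q : (Fin d → Fin n) → Fin n) : Prop :=
  ∀ (i : Fin d) (x : Fin d → Fin n),
    Function.Bijective (fun v : Fin n => Q (Function.update x i v))

/-- `(A, B)` is a cuboctahedron of the hypercube `Q`: the two (possibly degenerate)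
subcubes of order 2 determined by the pairs `A i` and `B i` carry the same symbols. -/
def IsCuboct {d n : ℕ} (Q : (Fin d → Fin n) → Fin n)
    (A B : Fin d → Fin n × Fin n) : Prop :=
  ∀ j : Fin d → Fin 2,
    Q (fun i => if j i = 0 then (A i).1 else (A i).2) =
    Q (fun i => if j i = 0 then (B i).1 else (B i).2)

/-- The number of cuboctahedra of the hypercube `Q` (ordered pairs `(A, B)`). -/
noncomputable def cuboctCount {d n : ℕ} (Q : (Fin d → Fin n) → Fin n) : ℕ :=
  Set.ncard {p : (Fin d → Fin n × Fin n) × (Fin d → Fin n × Fin n) |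
    IsCuboct Q p.1 p.2}

section CuboctAux

open Finset

variable {α β : Type*} [DecidableEq α] [DecidableEq β]

omit [DecidableEq α] in
/-- Cauchy–Schwarz counting: pairs with equal `f`-value within `S`. -/
lemma card_sq_le_image_mul_pairs (S : Finset α) (f : α → β) :
    S.card ^ 2 ≤ (S.image f).card *
      ((S ×ˢ S).filter (fun p => f p.1 = f p.2)).card := by
  classical
  set V := S.image f with hV
  have hS : S.card = ∑ v ∈ V, (S.filter (fun a => f a = v)).card :=
    Finset.card_eq_sum_card_fiberwise (fun x hx => Finset.mem_image_of_mem f hx)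
  have hG : ((S ×ˢ S).filter (fun p => f p.1 = f p.2)).card
      = ∑ v ∈ V, ((S.filter (fun a => f a = v)).card) ^ 2 := by
    rw [Finset.card_eq_sum_card_fiberwise
      (f := fun p : α × α => f p.1) (t := V)
      (by rintro ⟨a, b⟩ hp
          simp only [Finset.mem_coe, Finset.mem_filter, Finset.mem_product] at hp
          exact Finset.mem_image_of_mem f hp.1.1)]
    refine Finset.sum_congr rfl (fun v hv => ?_)
    have : ((S ×ˢ S).filter (fun p => f p.1 = f p.2)).filter
        (fun p : α × α => f p.1 = v)
        = (S.filter (fun a => f a = v)) ×ˢ (S.filter (fun a => f a = v)) := by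
      ext ⟨a, b⟩
      simp only [Finset.mem_filter, Finset.mem_product]
      constructor
      · rintro ⟨⟨⟨ha, hb⟩, hab⟩, hav⟩
        exact ⟨⟨ha, hav⟩, hb, hab ▸ hav⟩
      · rintro ⟨⟨ha, hav⟩, hb, hbv⟩
        exact ⟨⟨⟨ha, hb⟩, hav.trans hbv.symm⟩, hav⟩
    rw [this, Finset.card_product, sq]
  rw [hS, hG]
  exact sq_sum_le_card_mul_sum_sq


section
variable {d n : ℕ} (Q : (Fin d → Fin n) → Fin n)

/-- The pattern of a subcube. -/
def cubPat (A : Fin d → Fin n × Fin n) : (Fin d → Fin 2) → Fin n :=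
  fun j => Q (fun i => if j i = 0 then (A i).1 else (A i).2)

/-- Cubes whose set of non-degenerate coordinates is exactly `s`. -/
def Cset (s : Finset (Fin d)) : Finset (Fin d → Fin n × Fin n) :=
  Finset.univ.filter (fun A => ∀ i, ((A i).1 = (A i).2 ↔ i ∉ s))

lemma card_Cset (s : Finset (Fin d)) :
    (Cset (n := n) s).card = (n ^ 2 - n) ^ s.card * n ^ (d - s.card) := by
  classical
  have : Cset (n := n) s = Fintype.piFinset (fun i =>
      if i ∈ s then Finset.univ.filter (fun p : Fin n × Fin n => ¬ p.1 = p.2)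
      else Finset.univ.filter (fun p : Fin n × Fin n => p.1 = p.2)) := by
    ext A
    simp only [Cset, Finset.mem_filter, Finset.mem_univ, true_and,
      Fintype.mem_piFinset]
    constructor
    · intro h i
      by_cases hi : i ∈ s <;> simp [hi, (h i)]
    · intro h i
      have := h i
      by_cases hi : i ∈ s <;> simp [hi] at this <;> simp [hi, this]
  rw [this, Fintype.card_piFinset]
  have hdiag : (Finset.univ.filter (fun p : Fin n × Fin n => p.1 = p.2)).card = n := by
    have : Finset.univ.filter (fun p : Fin n × Fin n => p.1 = p.2)
        = Finset.univ.image (fun a : Fin n => (a, a)) := by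
      ext ⟨a, b⟩
      simp only [Finset.mem_filter, Finset.mem_univ, true_and, Finset.mem_image]
      constructor
      · rintro rfl; exact ⟨a, by simp⟩
      · rintro ⟨c, h⟩
        simp only [Prod.mk.injEq] at h
        rw [← h.1, ← h.2]
    rw [this, Finset.card_image_of_injective _ (fun a b h => (Prod.mk.injEq _ _ _ _ ▸ h).1)]
    simp
  have hoff : (Finset.univ.filter (fun p : Fin n × Fin n => ¬ p.1 = p.2)).card = n ^ 2 - n := by
    have htot := Finset.card_filter_add_card_filter_not
      (s := (Finset.univ : Finset (Fin n × Fin n)))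
      (p := fun p : Fin n × Fin n => p.1 = p.2)
    have hcard : (Finset.univ : Finset (Fin n × Fin n)).card = n ^ 2 := by
      simp [sq]
    omega
  have : ∀ i : Fin d, #(if i ∈ s then filter (fun p : Fin n × Fin n => ¬p.1 = p.2) univ
      else filter (fun p : Fin n × Fin n => p.1 = p.2) univ)
      = if i ∈ s then n ^ 2 - n else n := by
    intro i; by_cases hi : i ∈ s <;> simp [hi, hdiag, hoff]
  simp only [this]
  rw [Finset.prod_ite, Finset.prod_const, Finset.prod_const]
  congr 1
  · congr 1
    simpa using rfl
  · congr 1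
    have : Finset.filter (fun i => ¬ i ∈ s) Finset.univ = sᶜ := by
      ext i; simp
    rw [this, Finset.card_compl, Fintype.card_fin]

lemma cubPat_restrict (s : Finset (Fin d)) (A : Fin d → Fin n × Fin n)
    (hA : ∀ i, i ∉ s → (A i).1 = (A i).2) (j j' : Fin d → Fin 2)
    (h : ∀ i ∈ s, j i = j' i) : cubPat Q A j = cubPat Q A j' := by
  unfold cubPat
  congr 1
  funext i
  by_cases hi : i ∈ s
  · rw [h i hi]
  · have := hA i hi
    split_ifs <;> simp [this]

lemma card_image_cubPat (s : Finset (Fin d)) :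
    ((Cset (n := n) s).image (cubPat Q)).card ≤ n ^ 2 ^ s.card := by
  classical
  have hcard : Fintype.card (({ i // i ∈ s } → Fin 2) → Fin n) = n ^ 2 ^ s.card := by
    rw [Fintype.card_fun, Fintype.card_fun, Fintype.card_fin, Fintype.card_fin,
      Fintype.card_coe]
  calc ((Cset (n := n) s).image (cubPat Q)).card
      ≤ (Finset.univ : Finset (({ i // i ∈ s } → Fin 2) → Fin n)).card := by
        apply Finset.card_le_card_of_injOn
          (fun P => fun f => P (fun i => if h : i ∈ s then f ⟨i, h⟩ else 0))
          (fun _ _ => Finset.mem_univ _)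
        intro P1 hP1 P2 hP2 heq
        simp only [Finset.coe_image, Set.mem_image, Finset.mem_coe] at hP1 hP2
        obtain ⟨A1, hA1, rfl⟩ := hP1
        obtain ⟨A2, hA2, rfl⟩ := hP2
        simp only [Cset, Finset.mem_filter] at hA1 hA2
        funext j
        have key : ∀ (A : Fin d → Fin n × Fin n), (∀ i, ((A i).1 = (A i).2 ↔ i ∉ s)) →
            cubPat Q A j = (fun (f : { i // i ∈ s } → Fin 2) =>
              cubPat Q A (fun i => if h : i ∈ s then f ⟨i, h⟩ else 0))
              (fun i => j i.1) := by
          intro A hA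
          exact cubPat_restrict Q s A (fun i hi => (hA i).2 hi) _ _
            (fun i hi => by simp [hi])
        rw [key A1 hA1.2, key A2 hA2.2]
        simpa using congrFun heq (fun i => j i.1)
      _ = n ^ 2 ^ s.card := by rw [Finset.card_univ, hcard]

lemma gs_card (s : Finset (Fin d)) :
    (Cset (n := n) s).card ^ 2 ≤ n ^ 2 ^ s.card *
      (((Cset (n := n) s) ×ˢ (Cset (n := n) s)).filter
        (fun p => cubPat Q p.1 = cubPat Q p.2)).card :=
  le_trans (card_sq_le_image_mul_pairs (Cset s) (cubPat Q))
    (Nat.mul_le_mul_right _ (card_image_cubPat Q s))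

lemma fam_card (s : Finset (Fin d)) :
    (((Cset (n := n) s) ×ˢ (Cset (n := n) s)).filter
        (fun p => cubPat Q p.1 = cubPat Q p.2)).card
    ≤ ((((Cset (n := n) s) ×ˢ (Cset (n := n) s)).filter
        (fun p => cubPat Q p.1 = cubPat Q p.2)).filter (fun p => ¬ p.1 = p.2)).card
      + (Cset (n := n) s).card := by
  classical
  set G := ((Cset (n := n) s) ×ˢ (Cset (n := n) s)).filter
      (fun p => cubPat Q p.1 = cubPat Q p.2) with hG
  have hsplit := Finset.card_filter_add_card_filter_not
    (s := G) (p := fun p => p.1 = p.2)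
  have hdiag : (G.filter (fun p => p.1 = p.2)).card ≤ (Cset (n := n) s).card := by
    apply Finset.card_le_card_of_injOn (fun p => p.1)
    · intro p hp
      simp only [hG, Finset.mem_coe, Finset.mem_filter, Finset.mem_product] at hp
      exact hp.1.1.1
    · intro p hp q hq h
      simp only [hG, Finset.coe_filter, Set.mem_setOf_eq] at hp hq
      have h' : p.1 = q.1 := h
      exact Prod.ext h' (by rw [← hp.2, ← hq.2]; exact h')
  omega

lemma good_card_ge :
    (n ^ 2) ^ d + ∑ s ∈ (Finset.univ.powersetCard 1 ∪ Finset.univ.powersetCard 2 :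
        Finset (Finset (Fin d))),
      ((((Cset (n := n) s) ×ˢ (Cset (n := n) s)).filter
        (fun p => cubPat Q p.1 = cubPat Q p.2)).filter (fun p => ¬ p.1 = p.2)).card
    ≤ ((Finset.univ : Finset ((Fin d → Fin n × Fin n) × (Fin d → Fin n × Fin n))).filter
        (fun p => cubPat Q p.1 = cubPat Q p.2)).card := by
  classical
  set P := (Fin d → Fin n × Fin n) × (Fin d → Fin n × Fin n) with hP
  set Fam : Finset (Fin d) → Finset P := fun s =>
    (((Cset (n := n) s) ×ˢ (Cset (n := n) s)).filter
      (fun p => cubPat Q p.1 = cubPat Q p.2)).filter (fun p => ¬ p.1 = p.2) with hFam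
  set S : Finset (Finset (Fin d)) :=
    Finset.univ.powersetCard 1 ∪ Finset.univ.powersetCard 2 with hS
  set T0 : Finset P := (Finset.univ : Finset (Fin d → Fin n × Fin n)).image
    (fun A => (A, A)) with hT0
  set Good : Finset P := Finset.univ.filter
    (fun p : P => cubPat Q p.1 = cubPat Q p.2) with hGood
  have hmemFam : ∀ s, ∀ p : P, p ∈ Fam s →
      (cubPat Q p.1 = cubPat Q p.2 ∧ ¬ p.1 = p.2 ∧
        ∀ i, ((p.1 i).1 = (p.1 i).2 ↔ i ∉ s)) := by
    intro s p hp
    rw [hFam, Finset.mem_filter, Finset.mem_filter, Finset.mem_product] at hp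
    obtain ⟨⟨⟨h1, -⟩, hpat⟩, hne⟩ := hp
    simp only [Cset, Finset.mem_filter, Finset.mem_univ, true_and] at h1
    exact ⟨hpat, hne, h1⟩
  have hT0card : T0.card = (n ^ 2) ^ d := by
    rw [hT0, Finset.card_image_of_injective _
      (fun a b h => congrArg Prod.fst h), Finset.card_univ]
    simp [Fintype.card_fun, sq]
  have hdisjT0 : Disjoint T0 (S.biUnion Fam) := by
    rw [Finset.disjoint_left]
    intro p hp hp'
    obtain ⟨A, -, rfl⟩ := Finset.mem_image.mp hp
    obtain ⟨s, -, hps⟩ := Finset.mem_biUnion.mp hp'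
    exact (hmemFam s _ hps).2.1 rfl
  have hpair : ∀ s ∈ S, ∀ t ∈ S, s ≠ t → Disjoint (Fam s) (Fam t) := by
    intro s _ t _ hst
    rw [Finset.disjoint_left]
    intro p hps hpt
    refine hst ?_
    ext i
    have h1 := ((hmemFam s p hps).2.2 i)
    have h2 := ((hmemFam t p hpt).2.2 i)
    by_cases h : (p.1 i).1 = (p.1 i).2
    · simp [h1.mp h, h2.mp h]
    · constructor <;> intro <;> by_contra hc
      · exact h (h2.mpr hc)
      · exact h (h1.mpr hc)
  have hsub : T0 ∪ S.biUnion Fam ⊆ Good := by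
    intro p hp
    rcases Finset.mem_union.mp hp with hp | hp
    · obtain ⟨A, -, rfl⟩ := Finset.mem_image.mp hp
      simp [hGood]
    · obtain ⟨s, -, hps⟩ := Finset.mem_biUnion.mp hp
      simp only [hGood, Finset.mem_filter, Finset.mem_univ, true_and]
      exact (hmemFam s _ hps).1
  calc (n ^ 2) ^ d + ∑ s ∈ S, (Fam s).card
      = T0.card + (S.biUnion Fam).card := by
        rw [hT0card, Finset.card_biUnion hpair]
    _ = (T0 ∪ S.biUnion Fam).card := (Finset.card_union_of_disjoint hdisjT0).symm
    _ ≤ Good.card := Finset.card_le_card hsub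

set_option maxHeartbeats 1000000 in
lemma fam_card_real (hd : 3 ≤ d) (hn : 1 ≤ n) (s : Finset (Fin d))
    (hs : s.card = 1 ∨ s.card = 2) :
    (n : ℝ) ^ (2 * d) - 5 * (n : ℝ) ^ (2 * d - 1)
      ≤ (((((Cset (n := n) s) ×ˢ (Cset (n := n) s)).filter
        (fun p => cubPat Q p.1 = cubPat Q p.2)).filter (fun p => ¬ p.1 = p.2)).card : ℝ) := by
  classical
  have hG := gs_card Q s
  have hF := fam_card Q s
  have hc := card_Cset (n := n) s
  set F := ((((Cset (n := n) s) ×ˢ (Cset (n := n) s)).filter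
      (fun p => cubPat Q p.1 = cubPat Q p.2)).filter (fun p => ¬ p.1 = p.2)).card with hFdef
  set G := (((Cset (n := n) s) ×ˢ (Cset (n := n) s)).filter
      (fun p => cubPat Q p.1 = cubPat Q p.2)).card with hGdef
  have hchain : (Cset (n := n) s).card ^ 2 ≤ n ^ 2 ^ s.card * (F + (Cset (n := n) s).card) :=
    le_trans hG (Nat.mul_le_mul_left _ hF)
  rw [hc] at hchain
  have hchainR : (((n ^ 2 - n : ℕ) : ℝ) ^ s.card * (n : ℝ) ^ (d - s.card)) ^ 2
      ≤ (n : ℝ) ^ 2 ^ s.card * ((F : ℝ) + ((n ^ 2 - n : ℕ) : ℝ) ^ s.card * (n : ℝ) ^ (d - s.card)) := by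
    have hcast : ((Cset (n := n) s).card : ℝ)
        = ((n ^ 2 - n : ℕ) : ℝ) ^ s.card * (n : ℝ) ^ (d - s.card) := by
      rw [hc]; push_cast; ring
    exact_mod_cast hchain
  have hMpos : (0 : ℝ) < (n : ℝ) ^ 2 ^ s.card := by positivity
  have hnR : (1 : ℝ) ≤ (n : ℝ) := by exact_mod_cast hn
  have hsub : ((n ^ 2 - n : ℕ) : ℝ) = (n : ℝ) ^ 2 - (n : ℝ) := by
    have h2 : n ≤ n ^ 2 := Nat.le_self_pow two_ne_zero n
    push_cast [Nat.cast_sub h2]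
    ring
  rw [hsub] at hchainR
  -- suffices to prove `(target + c) * M ≤ c ^ 2`
  suffices hkey : ((n : ℝ) ^ (2 * d) - 5 * (n : ℝ) ^ (2 * d - 1)
        + ((n : ℝ) ^ 2 - (n : ℝ)) ^ s.card * (n : ℝ) ^ (d - s.card))
      * (n : ℝ) ^ 2 ^ s.card
      ≤ (((n : ℝ) ^ 2 - (n : ℝ)) ^ s.card * (n : ℝ) ^ (d - s.card)) ^ 2 by
    have h1 := hkey.trans hchainR
    rw [mul_comm] at h1
    have h2 := le_of_mul_le_mul_left h1 hMpos
    linarith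
  set p : ℝ := (n : ℝ) ^ (d - 2) with hpdef
  have hp1 : (1 : ℝ) ≤ p := one_le_pow₀ hnR
  have hp2 : (n : ℝ) ≤ p := by
    rw [hpdef]
    calc (n : ℝ) = (n : ℝ) ^ 1 := (pow_one _).symm
    _ ≤ (n : ℝ) ^ (d - 2) := pow_le_pow_right₀ hnR (by omega)
  have e1 : (n : ℝ) ^ (2 * d) = p ^ 2 * (n : ℝ) ^ 4 := by
    rw [hpdef, ← pow_mul, ← pow_add]
    congr 1
    omega
  have e2 : (n : ℝ) ^ (2 * d - 1) = p ^ 2 * (n : ℝ) ^ 3 := by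
    rw [hpdef, ← pow_mul, ← pow_add]
    congr 1
    omega
  have e3 : (n : ℝ) ^ (d - 1) = p * (n : ℝ) := by
    rw [hpdef, ← pow_succ]
    congr 1
    omega
  have e4 : (n : ℝ) ^ (d - 2) = p := rfl
  clear_value p
  clear hpdef
  have hn0 : (0 : ℝ) ≤ (n : ℝ) := by positivity
  have hp0 : (0 : ℝ) ≤ p := le_trans zero_le_one hp1
  rcases hs with hs | hs
  · rw [hs, e1, e2, e3]
    have e5 : (n : ℝ) ^ (2 ^ 1 : ℕ) = (n : ℝ) ^ 2 := by norm_num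
    rw [e5]
    have h5 : p * (n : ℝ) ^ 5 ≤ p ^ 2 * (n : ℝ) ^ 5 := by
      nlinarith [mul_le_mul_of_nonneg_right hp1 (mul_nonneg hp0 (pow_nonneg hn0 5))]
    nlinarith [h5, mul_nonneg (mul_nonneg hp0 hp0) (pow_nonneg hn0 5),
      mul_nonneg (mul_nonneg hp0 hp0) (pow_nonneg hn0 4),
      mul_nonneg hp0 (pow_nonneg hn0 4)]
  · rw [hs, e1, e2, e4]
    have e5 : (n : ℝ) ^ (2 ^ 2 : ℕ) = (n : ℝ) ^ 4 := by norm_num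
    rw [e5]
    have h7 : p * (n : ℝ) ^ 8 ≤ p ^ 2 * (n : ℝ) ^ 7 := by
      nlinarith [mul_le_mul_of_nonneg_left hp2 (mul_nonneg hp0 (pow_nonneg hn0 7))]
    have h8 : p * (n : ℝ) ^ 6 ≤ p ^ 2 * (n : ℝ) ^ 6 := by
      nlinarith [mul_le_mul_of_nonneg_right hp1 (mul_nonneg hp0 (pow_nonneg hn0 6))]
    have h9 : p ^ 2 * (n : ℝ) ^ 5 ≤ p ^ 2 * (n : ℝ) ^ 6 := by
      nlinarith [mul_le_mul_of_nonneg_right hnR (mul_nonneg (mul_nonneg (mul_nonneg hp0 hp0)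
        (pow_nonneg hn0 5)) hn0)]
    have key : p * (n : ℝ) ^ 8 - 2 * p * (n : ℝ) ^ 7 + p * (n : ℝ) ^ 6
        ≤ p ^ 2 * (n : ℝ) ^ 7 + 6 * p ^ 2 * (n : ℝ) ^ 6 - 4 * p ^ 2 * (n : ℝ) ^ 5
          + p ^ 2 * (n : ℝ) ^ 4 := by
      linarith [h7, h8, h9, mul_nonneg hp0 (pow_nonneg hn0 7),
        mul_nonneg (mul_nonneg hp0 hp0) (pow_nonneg hn0 4),
        mul_nonneg (mul_nonneg hp0 hp0) (pow_nonneg hn0 6),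
        mul_nonneg (mul_nonneg hp0 hp0) (pow_nonneg hn0 5)]
    nlinarith [key]

end

/-- Asymptotically, every `d`-dimensional latin hypercube (`d ≥ 3`) of order `n`
contains at least `(d(d-1)/2 + d + 1 + o(1)) * n ^ (2d)` cuboctahedra as `n → ∞`. -/
theorem cuboctCount_asymptotic_lower_bound (d : ℕ) (hd : 3 ≤ d)
    (ε : ℝ) (hε : 0 < ε) :
    ∃ N : ℕ, ∀ n : ℕ, N ≤ n →
      ∀ Q : (Fin d → Fin n) → Fin n, IsLatinHypercube Q →
        ((d : ℝ) * ((d : ℝ) - 1) / 2 + (d : ℝ) + 1 - ε) * (n : ℝ) ^ (2 * d) ≤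
          (cuboctCount Q : ℝ) := by
  classical
  set Dtot := d + d * (d - 1) / 2 with hDdef
  refine ⟨max 1 (Nat.ceil ((5 * (Dtot : ℝ)) / ε)) + 1, fun n hn Q _ => ?_⟩
  have hn1 : 1 ≤ n := le_trans (le_trans (le_max_left _ _) (Nat.le_succ _)) hn
  -- identify `cuboctCount` with the Finset count
  have hcount : (cuboctCount Q : ℕ) =
      ((Finset.univ : Finset ((Fin d → Fin n × Fin n) × (Fin d → Fin n × Fin n))).filter
        (fun p => cubPat Q p.1 = cubPat Q p.2)).card := by
    rw [cuboctCount]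
    have hset : {p : (Fin d → Fin n × Fin n) × (Fin d → Fin n × Fin n) |
        IsCuboct Q p.1 p.2} =
        ↑((Finset.univ : Finset ((Fin d → Fin n × Fin n) × (Fin d → Fin n × Fin n))).filter
          (fun p => cubPat Q p.1 = cubPat Q p.2)) := by
      ext p
      simp only [Set.mem_setOf_eq, Finset.coe_filter, Finset.mem_univ, true_and]
      exact ⟨fun h => funext h, fun h j => congrFun h j⟩
    rw [hset, Set.ncard_coe_finset]
  set S : Finset (Finset (Fin d)) :=
    Finset.univ.powersetCard 1 ∪ Finset.univ.powersetCard 2 with hSdef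
  have hScard : S.card = Dtot := by
    rw [hSdef, Finset.card_union_of_disjoint, Finset.card_powersetCard,
      Finset.card_powersetCard, Finset.card_univ, Fintype.card_fin,
      Nat.choose_one_right, Nat.choose_two_right]
    rw [Finset.disjoint_left]
    intro s h1 h2
    have c1 := (Finset.mem_powersetCard.mp h1).2
    have c2 := (Finset.mem_powersetCard.mp h2).2
    omega
  have hmain := good_card_ge (d := d) (n := n) Q
  -- real versions
  have hnR : (1 : ℝ) ≤ (n : ℝ) := by exact_mod_cast hn1
  have hpow : ((n : ℝ) ^ 2) ^ d = (n : ℝ) ^ (2 * d) := by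
    rw [← pow_mul]
  have hpow2 : (n : ℝ) ^ (2 * d) = (n : ℝ) * (n : ℝ) ^ (2 * d - 1) := by
    rw [← pow_succ']
    congr 1
    omega
  have hsum : ((Dtot : ℝ)) * ((n : ℝ) ^ (2 * d) - 5 * (n : ℝ) ^ (2 * d - 1))
      ≤ ∑ s ∈ S, (((((Cset (n := n) s) ×ˢ (Cset (n := n) s)).filter
        (fun p => cubPat Q p.1 = cubPat Q p.2)).filter (fun p => ¬ p.1 = p.2)).card : ℝ) := by
    have := Finset.card_nsmul_le_sum S
      (fun s => (((((Cset (n := n) s) ×ˢ (Cset (n := n) s)).filter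
        (fun p => cubPat Q p.1 = cubPat Q p.2)).filter (fun p => ¬ p.1 = p.2)).card : ℝ))
      ((n : ℝ) ^ (2 * d) - 5 * (n : ℝ) ^ (2 * d - 1))
      (fun s hs => by
        refine fam_card_real Q hd hn1 s ?_
        rcases Finset.mem_union.mp hs with h | h
        · exact Or.inl (Finset.mem_powersetCard.mp h).2
        · exact Or.inr (Finset.mem_powersetCard.mp h).2)
    rwa [nsmul_eq_mul, hScard] at this
  -- cast the main inequality
  have hmainR : ((n : ℝ) ^ 2) ^ d + ∑ s ∈ S, (((((Cset (n := n) s) ×ˢ (Cset (n := n) s)).filter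
        (fun p => cubPat Q p.1 = cubPat Q p.2)).filter (fun p => ¬ p.1 = p.2)).card : ℝ)
      ≤ ((cuboctCount Q : ℕ) : ℝ) := by
    rw [hcount]
    exact_mod_cast hmain
  -- constant identification
  have heven : 2 * (d * (d - 1) / 2) = d * (d - 1) := by
    apply Nat.two_mul_div_two_of_even
    have : d - 1 + 1 = d := by omega
    have h := Nat.even_mul_succ_self (d - 1)
    rw [this] at h
    rwa [mul_comm]
  have hDR : (Dtot : ℝ) = (d : ℝ) * ((d : ℝ) - 1) / 2 + (d : ℝ) := by
    have h2 : (2 * Dtot : ℕ) = 2 * d + d * (d - 1) := by omega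
    have h2R : (2 : ℝ) * (Dtot : ℝ) = 2 * (d : ℝ) + (d : ℝ) * ((d : ℝ) - 1) := by
      have := congrArg (fun k : ℕ => (k : ℝ)) h2
      push_cast [Nat.cast_sub (by omega : 1 ≤ d)] at this
      linarith
    linarith
  -- epsilon condition
  have hNeps : 5 * (Dtot : ℝ) ≤ ε * (n : ℝ) := by
    have h1 : (Nat.ceil ((5 * (Dtot : ℝ)) / ε) : ℝ) ≤ (n : ℝ) := by
      have : Nat.ceil ((5 * (Dtot : ℝ)) / ε) ≤ n := by omega
      exact_mod_cast this
    have h2 : (5 * (Dtot : ℝ)) / ε ≤ (n : ℝ) := le_trans (Nat.le_ceil _) h1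
    rw [div_le_iff₀ hε] at h2
    linarith
  have hp1 : (0 : ℝ) ≤ (n : ℝ) ^ (2 * d - 1) := by positivity
  calc ((d : ℝ) * ((d : ℝ) - 1) / 2 + (d : ℝ) + 1 - ε) * (n : ℝ) ^ (2 * d)
      = ((Dtot : ℝ) + 1) * (n : ℝ) ^ (2 * d) - ε * ((n : ℝ) * (n : ℝ) ^ (2 * d - 1)) := by
        rw [hDR, ← hpow2]; ring
    _ ≤ ((Dtot : ℝ) + 1) * (n : ℝ) ^ (2 * d) - 5 * (Dtot : ℝ) * (n : ℝ) ^ (2 * d - 1) := by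
        have := mul_le_mul_of_nonneg_right hNeps hp1
        linarith
    _ = (n : ℝ) ^ (2 * d) + (Dtot : ℝ) * ((n : ℝ) ^ (2 * d) - 5 * (n : ℝ) ^ (2 * d - 1)) := by
        ring
    _ ≤ ((n : ℝ) ^ 2) ^ d + ∑ s ∈ S, (((((Cset (n := n) s) ×ˢ (Cset (n := n) s)).filter
        (fun p => cubPat Q p.1 = cubPat Q p.2)).filter (fun p => ¬ p.1 = p.2)).card : ℝ) := by
        rw [hpow]
        linarith [hsum]
    _ ≤ ((cuboctCount Q : ℕ) : ℝ) := hmainR
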